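/- For partitions μ, ν of n with ν having k parts, let a_{μν}(q) = Σ ∏_{j=1}^k ψ_{μ^j/μ^{j-1}}(q) over chains ∅ = μ⁰ ⊆ ⋯ ⊆ μ^k = μ with μ^j/μ^{j-1} a horizontal ν_j-strip, where ψ_{λ/ρ}(q) = ∏_{i≥1} [λ_i − λ_{i+1} choose λ_i − ρ_i]_q. Then b_{μν}(q) = (∏_{i≥1}[ν_i]_q! / ∏_{i≥1}[μ_i − μ_{i+1}]_q!) · a_{μν}(q), where b_{μν}(q) = Σ over the same chains of ∏_j θ_{μ^j/μ^{j-1}}(q) with θ_{λ/ρ}(q) = ([|λ|−|ρ|]_q!/[λ₁−ρ₁]_q!) ∏_{i≥1} [ρ_i−ρ_{i+1} choose λ_{i+1}−ρ_{i+1}]_q. -/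

import Mathlib

open Finset
open scoped Classical

/-- The `q`-analog `[n]_q = 1 + q + ⋯ + q^{n-1}` as a rational function in `q`. -/
noncomputable def qInt (n : ℕ) : RatFunc ℚ := ∑ i ∈ Finset.range n, RatFunc.X ^ i

/-- The `q`-factorial `[n]_q!`. -/
noncomputable def qFact : ℕ → RatFunc ℚ
  | 0 => 1
  | n + 1 => qFact n * qInt (n + 1)

/-- The Gaussian binomial coefficient `[a choose b]_q`. -/
noncomputable def qBinom (a b : ℕ) : RatFunc ℚ :=
  if b ≤ a then qFact a / (qFact b * qFact (a - b)) else 0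

/-- A function `μ : ℕ → ℕ` is an integer partition (0-indexed parts, trailing zeros). -/
def IsPartitionFun (μ : ℕ → ℕ) : Prop :=
  (∀ i, μ (i + 1) ≤ μ i) ∧ ∃ N, ∀ i, N ≤ i → μ i = 0

/-- The size `|μ|` of a partition. -/
noncomputable def psize (μ : ℕ → ℕ) : ℕ := ∑ᶠ i, μ i

/-- `μ/ρ` is a horizontal strip: `ρ ⊆ μ` and `μ_{i+1} ≤ ρ_i` for all `i`. -/
def IsHorizStrip (ρ μ : ℕ → ℕ) : Prop :=
  (∀ i, ρ i ≤ μ i) ∧ ∀ i, μ (i + 1) ≤ ρ i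

/-- `θ_{μ/ρ}(q) = ([|μ|−|ρ|]_q!/[μ₁−ρ₁]_q!) ∏_{i≥1} [ρ_i−ρ_{i+1} choose μ_{i+1}−ρ_{i+1}]_q`. -/
noncomputable def theta (μ ρ : ℕ → ℕ) : RatFunc ℚ :=
  (qFact (psize μ - psize ρ) / qFact (μ 0 - ρ 0)) *
    ∏ᶠ i : ℕ, qBinom (ρ i - ρ (i + 1)) (μ (i + 1) - ρ (i + 1))

/-- `ψ_{μ/ρ}(q) = ∏_{i≥1} [μ_i−μ_{i+1} choose μ_i−ρ_i]_q`. -/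
noncomputable def psiStrip (μ ρ : ℕ → ℕ) : RatFunc ℚ :=
  ∏ᶠ i : ℕ, qBinom (μ i - μ (i + 1)) (μ i - ρ i)

/-- The chain condition: `∅ = c 0 ⊆ c 1 ⊆ ⋯ ⊆ c k = μ` with each `c (j+1) / c j` a
horizontal strip of size `ν j`. -/
def IsStripChain (μ ν : ℕ → ℕ) (k : ℕ) (c : Fin (k + 1) → ℕ → ℕ) : Prop :=
  (∀ i, c 0 i = 0) ∧ (∀ i, c (Fin.last k) i = μ i) ∧
  (∀ j : Fin (k + 1), IsPartitionFun (c j)) ∧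
  (∀ j : Fin k, IsHorizStrip (c j.castSucc) (c j.succ) ∧
    psize (c j.succ) = psize (c j.castSucc) + ν j.val)

/-- `b_{μν}(q)`: sum over all chains of partitions from `∅` to `μ` with horizontal strips
of sizes `ν 0, …, ν (k-1)` of the product of the `θ` weights. -/
noncomputable def bPoly (μ ν : ℕ → ℕ) (k : ℕ) : RatFunc ℚ :=
  ∑ᶠ c : Fin (k + 1) → ℕ → ℕ,
    if IsStripChain μ ν k c then ∏ j : Fin k, theta (c j.succ) (c j.castSucc) else 0

/-- `a_{μν}(q)`: the coefficient of `m_ν` in the monomial expansion of the `q`-Whittaker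
function `W_μ`, given by the sum over horizontal-strip chains of the product of `ψ` weights. -/
noncomputable def aPoly (μ ν : ℕ → ℕ) (k : ℕ) : RatFunc ℚ :=
  ∑ᶠ c : Fin (k + 1) → ℕ → ℕ,
    if IsStripChain μ ν k c then ∏ j : Fin k, psiStrip (c j.succ) (c j.castSucc) else 0

/-- `b_{μν}(q) = (∏_i [ν_i]_q! / ∏_i [μ_i − μ_{i+1}]_q!) ⋅ a_{μν}(q)`. -/
-- auxiliary
lemma qInt_ne_zero {n : ℕ} (h : 0 < n) : qInt n ≠ 0 := by
  have : qInt n = algebraMap (Polynomial ℚ) (RatFunc ℚ) (∑ i ∈ Finset.range n, Polynomial.X ^ i) := by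
    simp [qInt, map_sum, map_pow, RatFunc.algebraMap_X]
  rw [this]
  simp only [ne_eq, FaithfulSMul.algebraMap_eq_zero_iff]
  intro hc
  have := congrArg (Polynomial.coeff · 0) hc
  simp [Polynomial.coeff_X_pow, Finset.sum_ite_eq', h] at this

lemma qFact_ne_zero (n : ℕ) : qFact n ≠ 0 := by
  induction n with
  | zero => simp [qFact]
  | succ n ih => exact mul_ne_zero ih (qInt_ne_zero n.succ_pos)

lemma qFact_zero : qFact 0 = 1 := rfl

/-- `D λ = ∏ᶠ i, [λ_i - λ_{i+1}]_q!`. -/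
noncomputable def Dfun (lam : ℕ → ℕ) : RatFunc ℚ := ∏ᶠ i : ℕ, qFact (lam i - lam (i + 1))

lemma finprod_eq_range {f : ℕ → RatFunc ℚ} {N : ℕ} (h : ∀ i, N ≤ i → f i = 1) :
    ∏ᶠ i, f i = ∏ i ∈ Finset.range N, f i := by
  apply finprod_eq_prod_of_mulSupport_subset
  intro x hx
  simp only [Function.mem_mulSupport] at hx
  simp only [Finset.coe_range, Set.mem_Iio]
  by_contra hc
  exact hx (h x (le_of_not_gt hc))

lemma Dfun_eq_range {lam : ℕ → ℕ} {N : ℕ} (h : ∀ i, N ≤ i → lam i = 0) :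
    Dfun lam = ∏ i ∈ Finset.range N, qFact (lam i - lam (i + 1)) := by
  refine finprod_eq_range fun i hi => ?_
  rw [h i hi, h (i+1) (hi.trans (Nat.le_succ i)), qFact_zero]

lemma Dfun_ne_zero {lam : ℕ → ℕ} (h : ∃ N, ∀ i, N ≤ i → lam i = 0) : Dfun lam ≠ 0 := by
  obtain ⟨N, hN⟩ := h
  rw [Dfun_eq_range hN]
  exact Finset.prod_ne_zero_iff.2 fun i _ => qFact_ne_zero _

lemma Dfun_zero : Dfun (fun _ => 0) = 1 := by
  simp [Dfun, qFact_zero]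

/-- Single strip identity: `θ_{λ/ρ} ⋅ D(λ) = [|λ|-|ρ|]! ⋅ D(ρ) ⋅ ψ_{λ/ρ}`. -/
lemma theta_mul_D (lam rho : ℕ → ℕ)
    (hlam : IsPartitionFun lam) (hrho : IsPartitionFun rho)
    (hsub : ∀ i, rho i ≤ lam i) (hstrip : ∀ i, lam (i + 1) ≤ rho i) :
    theta lam rho * Dfun lam
      = qFact (psize lam - psize rho) * Dfun rho * psiStrip lam rho := by
  obtain ⟨N, hN⟩ := hlam.2
  have hNρ : ∀ i, N ≤ i → rho i = 0 := fun i hi =>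
    Nat.le_zero.1 ((hN i hi) ▸ hsub i)
  -- elementwise identity
  have key : ∀ i : ℕ,
      qBinom (rho i - rho (i+1)) (lam (i+1) - rho (i+1)) * qFact (lam (i+1) - rho (i+1))
        * qFact (lam i - lam (i+1))
      = qBinom (lam i - lam (i+1)) (lam i - rho i) * qFact (lam i - rho i)
        * qFact (rho i - rho (i+1)) := by
    intro i
    have h1 : lam (i+1) - rho (i+1) ≤ rho i - rho (i+1) :=
      Nat.sub_le_sub_right (hstrip i) _
    have h2 : lam i - rho i ≤ lam i - lam (i+1) :=
      Nat.sub_le_sub_left (hstrip i) _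
    have e1 : (rho i - rho (i+1)) - (lam (i+1) - rho (i+1)) = rho i - lam (i+1) := by
      have := hrho.1 i; have := hstrip i; have := hsub (i+1); omega
    have e2 : (lam i - lam (i+1)) - (lam i - rho i) = rho i - lam (i+1) := by
      have := hsub i; have := hstrip i; have := hsub (i+1); have := hrho.1 i; omega
    rw [qBinom, qBinom, if_pos h1, if_pos h2, e1, e2]
    have hb1 := qFact_ne_zero (lam (i+1) - rho (i+1))
    have hb2 := qFact_ne_zero (lam i - rho i)
    have hb3 := qFact_ne_zero (rho i - lam (i+1))
    field_simp
  -- reduce finprods to range (N+1)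
  have hT : (∏ᶠ i : ℕ, qBinom (rho i - rho (i+1)) (lam (i+1) - rho (i+1)))
      = ∏ i ∈ Finset.range (N+1), qBinom (rho i - rho (i+1)) (lam (i+1) - rho (i+1)) := by
    refine finprod_eq_range fun i hi => ?_
    have h1 := Nat.le_trans (Nat.le_succ N) hi
    rw [hNρ i h1, hN (i+1) (Nat.le_trans h1 (Nat.le_succ i)),
      hNρ (i+1) (Nat.le_trans h1 (Nat.le_succ i))]
    simp [qBinom, qFact_zero]
  have hP : psiStrip lam rho
      = ∏ i ∈ Finset.range (N+1), qBinom (lam i - lam (i+1)) (lam i - rho i) := by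
    refine finprod_eq_range fun i hi => ?_
    have h1 := Nat.le_trans (Nat.le_succ N) hi
    rw [hN i h1, hNρ i h1]
    simp [qBinom, qFact_zero]
  have hDl : Dfun lam = ∏ i ∈ Finset.range (N+1), qFact (lam i - lam (i+1)) :=
    Dfun_eq_range fun i hi => hN i (Nat.le_trans (Nat.le_succ N) hi)
  have hDr : Dfun rho = ∏ i ∈ Finset.range (N+1), qFact (rho i - rho (i+1)) :=
    Dfun_eq_range fun i hi => hNρ i (Nat.le_trans (Nat.le_succ N) hi)
  -- product of elementwise identity
  have prodkey := Finset.prod_congr rfl (fun i (_ : i ∈ Finset.range (N+1)) => key i)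
  rw [Finset.prod_mul_distrib, Finset.prod_mul_distrib, Finset.prod_mul_distrib,
    Finset.prod_mul_distrib] at prodkey
  -- shift lemma for the factor ∏ qFact (lam i - rho i)
  have hshift : (∏ i ∈ Finset.range (N+1), qFact (lam i - rho i))
      = qFact (lam 0 - rho 0) * ∏ i ∈ Finset.range (N+1), qFact (lam (i+1) - rho (i+1)) := by
    rw [Finset.prod_range_succ' (fun i => qFact (lam i - rho i)) N]
    rw [Finset.prod_range_succ]
    rw [hN (N+1) (Nat.le_succ N), hNρ (N+1) (Nat.le_succ N)]
    rw [qFact_zero]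
    ring
  set A := ∏ i ∈ Finset.range (N+1), qFact (lam (i+1) - rho (i+1)) with hA
  have hAne : A ≠ 0 := Finset.prod_ne_zero_iff.2 fun i _ => qFact_ne_zero _
  rw [hshift] at prodkey
  -- now assemble
  have hd0 : qFact (lam 0 - rho 0) ≠ 0 := qFact_ne_zero _
  rw [hP, hDl, hDr]
  simp only [theta]
  rw [hT]
  rw [div_mul_eq_mul_div, div_mul_eq_mul_div, div_eq_iff hd0]
  refine mul_right_cancel₀ hAne ?_
  linear_combination qFact (psize lam - psize rho) * prodkey

lemma telescope {M : Type*} [CommMonoid M] (k : ℕ) (f g : Fin k → M) (F : Fin (k + 1) → M)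
    (h : ∀ j : Fin k, f j * F j.succ = g j * F j.castSucc) :
    (∏ j, f j) * F (Fin.last k) = (∏ j, g j) * F 0 := by
  induction k with
  | zero => simp [Fin.last]
  | succ k ih =>
    have ih' := ih (fun j => f j.castSucc) (fun j => g j.castSucc) (fun j => F j.castSucc)
      (fun j => by
        have := h j.castSucc
        rwa [Fin.succ_castSucc] at this)
    rw [Fin.prod_univ_castSucc f, Fin.prod_univ_castSucc g, ← Fin.succ_last,
      mul_assoc, h (Fin.last k), ← mul_assoc, mul_right_comm]
    rw [show F ((Fin.last k).castSucc) = (fun j : Fin (k+1) => F j.castSucc) (Fin.last k) from rfl,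
      ih']
    rw [mul_right_comm]
    norm_num

lemma chain_prod (μ ν : ℕ → ℕ) (k : ℕ) (c : Fin (k + 1) → ℕ → ℕ)
    (h : IsStripChain μ ν k c) :
    (∏ j : Fin k, theta (c j.succ) (c j.castSucc)) * Dfun μ
      = (∏ j ∈ Finset.range k, qFact (ν j)) *
          ∏ j : Fin k, psiStrip (c j.succ) (c j.castSucc) := by
  obtain ⟨h0, hlast, hpart, hstrip⟩ := h
  have hD0 : Dfun (c 0) = 1 := by
    refine finprod_eq_one_of_forall_eq_one fun i => ?_
    rw [h0 i, h0 (i + 1)]; rfl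
  have hclast : c (Fin.last k) = μ := funext hlast
  have key := telescope k (fun j => theta (c j.succ) (c j.castSucc))
      (fun j => qFact (ν j.val) * psiStrip (c j.succ) (c j.castSucc))
      (fun j => Dfun (c j)) ?_
  · simp only [hclast] at key
    rw [key, hD0, mul_one, Finset.prod_mul_distrib]
    rw [← Fin.prod_univ_eq_prod_range (fun j => qFact (ν j)) k]
  · intro j
    have hs := (hstrip j).1
    have hν : psize (c j.succ) - psize (c j.castSucc) = ν j.val := by
      rw [(hstrip j).2]; omega
    have hkey := theta_mul_D (c j.succ) (c j.castSucc) (hpart j.succ) (hpart j.castSucc)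
      hs.1 hs.2
    rw [hν] at hkey
    rw [hkey]; ring

lemma const_mul_finsum {α : Type*} (C : RatFunc ℚ) (f : α → RatFunc ℚ) :
    ∑ᶠ a, C * f a = C * ∑ᶠ a, f a := by
  by_cases hC : C = 0
  · simp [hC]
  by_cases hf : (Function.support f).Finite
  · exact (mul_finsum f C).symm
  · have h2 : Function.support (fun a => C * f a) = Function.support f := by
      ext a; simp [Function.mem_support, hC]
    rw [finsum_of_infinite_support (h2 ▸ hf), finsum_of_infinite_support hf, mul_zero]

theorem bPoly_eq_qWhittaker_coeff (n k : ℕ) (μ ν : ℕ → ℕ)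
    (hμ : IsPartitionFun μ) (hμn : psize μ = n)
    (hνanti : ∀ j, j + 1 < k → ν (j + 1) ≤ ν j) (hνpos : ∀ j < k, 0 < ν j)
    (hνzero : ∀ j, k ≤ j → ν j = 0) (hνsum : ∑ j ∈ Finset.range k, ν j = n) :
    bPoly μ ν k =
      ((∏ j ∈ Finset.range k, qFact (ν j)) / ∏ᶠ i : ℕ, qFact (μ i - μ (i + 1))) *
        aPoly μ ν k := by
  have hDμ : Dfun μ ≠ 0 := Dfun_ne_zero hμ.2
  have hC : (∏ᶠ i : ℕ, qFact (μ i - μ (i + 1))) = Dfun μ := rfl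
  rw [hC]
  set C : RatFunc ℚ := (∏ j ∈ Finset.range k, qFact (ν j)) / Dfun μ with hCdef
  have hpt : ∀ c : Fin (k + 1) → ℕ → ℕ,
      (if IsStripChain μ ν k c then ∏ j : Fin k, theta (c j.succ) (c j.castSucc) else 0)
        = C * (if IsStripChain μ ν k c then
            ∏ j : Fin k, psiStrip (c j.succ) (c j.castSucc) else 0) := by
    intro c
    by_cases hc : IsStripChain μ ν k c
    · simp only [if_pos hc]
      have hk := chain_prod μ ν k c hc
      rw [hCdef, div_mul_eq_mul_div, eq_div_iff hDμ]
      linear_combination hk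
    · simp [hc]
  rw [bPoly, aPoly, finsum_congr hpt, const_mul_finsum]
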